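/- Let A = [[0,c],[c,0]] with c ≠ 0, so that rank(A) = 2 and rank(EA + (EA)ᵀ) = 2 where E = [[0,-1],[1,0]]. Define b = x + ξ ∈ ℝ² and Φ(x, t, ξ) = ⟨Ax, ξ⟩ + t|x + ξ|. At any point where |b₁| = |b₂| = 1 and t = ε√2·c with ε the sign of b₂/b₁, the 3×2 mixed Hessian matrix (∂²Φ/∂(x₁,x₂,t)∂(ξ₁,ξ₂)) has rank 1. -/

import Mathlib

open Matrix

lemma rank_two_of_det_ne_zero (M : Matrix (Fin 2) (Fin 2) ℝ) (h : M.det ≠ 0) :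
    M.rank = 2 := by
  have : IsUnit M := by
    rw [Matrix.isUnit_iff_isUnit_det]
    exact h.isUnit
  simpa using Matrix.rank_of_isUnit M this

lemma rank_le_one_vecMulVec (w : Fin 3 → ℝ) (v : Fin 2 → ℝ) :
    (Matrix.vecMulVec w v).rank ≤ 1 := by
  rw [Matrix.vecMulVec_eq (Fin 1)]
  calc (Matrix.replicateCol (Fin 1) w * Matrix.replicateRow (Fin 1) v).rank
      ≤ (Matrix.replicateRow (Fin 1) v).rank := Matrix.rank_mul_le_right _ _
    _ ≤ Fintype.card (Fin 1) := Matrix.rank_le_card_height _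
    _ = 1 := by simp

lemma rank_pos_of_entry_ne_zero (M : Matrix (Fin 3) (Fin 2) ℝ) (i : Fin 3) (j : Fin 2)
    (h : M i j ≠ 0) : 1 ≤ M.rank := by
  rw [Nat.one_le_iff_ne_zero]
  intro h0
  have hr : LinearMap.range M.mulVecLin = ⊥ :=
    (Submodule.finrank_eq_zero (R := ℝ) (M := Fin 3 → ℝ)
      (S := LinearMap.range M.mulVecLin)).mp h0
  have h1 : M.mulVecLin (Pi.single j 1) = 0 := by
    have := LinearMap.mem_range_self M.mulVecLin (Pi.single j 1)
    rw [hr] at this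
    simpa using this
  have := congrFun h1 i
  simp [Matrix.mulVecLin, Matrix.mulVec_single] at this
  exact h this

/-- For `A = !![0,c;c,0]` with `c ≠ 0` (so `rank A = 2` and
`rank (E*A + (E*A)ᵀ) = 2`), at any point with `|b₁| = |b₂| = 1` and
`t = ε√2·c`, `ε` the sign of `b₂/b₁`, the 3×2 mixed Hessian of
`Φ(x,t,ξ) = ⟨Ax,ξ⟩ + t|x+ξ|` has rank 1. -/
theorem mixed_hessian_rank_one (c b₁ b₂ t : ℝ) (hc : c ≠ 0)
    (hb₁ : |b₁| = 1) (hb₂ : |b₂| = 1)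
    (ht : t = (b₁ * b₂) * Real.sqrt 2 * c) :
    (!![0, c; c, 0] : Matrix (Fin 2) (Fin 2) ℝ).rank = 2 ∧
    ((!![0, -1; 1, 0] : Matrix (Fin 2) (Fin 2) ℝ) * !![0, c; c, 0] +
      ((!![0, -1; 1, 0] : Matrix (Fin 2) (Fin 2) ℝ) * !![0, c; c, 0])ᵀ).rank = 2 ∧
    (!![t * b₂ ^ 2 / Real.sqrt (b₁ ^ 2 + b₂ ^ 2) ^ 3,
        c - t * b₁ * b₂ / Real.sqrt (b₁ ^ 2 + b₂ ^ 2) ^ 3;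
        c - t * b₁ * b₂ / Real.sqrt (b₁ ^ 2 + b₂ ^ 2) ^ 3,
        t * b₁ ^ 2 / Real.sqrt (b₁ ^ 2 + b₂ ^ 2) ^ 3;
        b₁ / Real.sqrt (b₁ ^ 2 + b₂ ^ 2),
        b₂ / Real.sqrt (b₁ ^ 2 + b₂ ^ 2)] : Matrix (Fin 3) (Fin 2) ℝ).rank = 1 := by
  have hb₁2 : b₁ ^ 2 = 1 := by rw [← sq_abs, hb₁]; norm_num
  have hb₂2 : b₂ ^ 2 = 1 := by rw [← sq_abs, hb₂]; norm_num
  have hb₁0 : b₁ ≠ 0 := by intro h; rw [h] at hb₁; simp at hb₁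
  have hr2 : Real.sqrt 2 ^ 2 = 2 := Real.sq_sqrt (by norm_num)
  have hr0 : Real.sqrt 2 ≠ 0 := ne_of_gt (Real.sqrt_pos.mpr (by norm_num))
  have hsum : b₁ ^ 2 + b₂ ^ 2 = 2 := by rw [hb₁2, hb₂2]; norm_num
  have h3 : Real.sqrt (b₁ ^ 2 + b₂ ^ 2) ^ 3 = 2 * Real.sqrt 2 := by
    rw [hsum, pow_succ, hr2]
  refine ⟨?_, ?_, ?_⟩
  · apply rank_two_of_det_ne_zero
    rw [Matrix.det_fin_two_of]
    intro h
    apply hc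
    nlinarith [sq_nonneg c]
  · apply rank_two_of_det_ne_zero
    have hEA : ((!![0, -1; 1, 0] : Matrix (Fin 2) (Fin 2) ℝ) * !![0, c; c, 0] +
        ((!![0, -1; 1, 0] : Matrix (Fin 2) (Fin 2) ℝ) * !![0, c; c, 0])ᵀ)
          = !![-(2*c), 0; 0, 2*c] := by
      ext i j
      fin_cases i <;> fin_cases j <;>
        simp [Matrix.mul_apply, Fin.sum_univ_two, Matrix.transpose_apply,
          Matrix.vecHead, Matrix.vecTail] <;> ring
    rw [hEA, Matrix.det_fin_two_of]
    intro h
    apply hc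
    nlinarith [sq_nonneg c]
  · have hM : (!![t * b₂ ^ 2 / Real.sqrt (b₁ ^ 2 + b₂ ^ 2) ^ 3,
        c - t * b₁ * b₂ / Real.sqrt (b₁ ^ 2 + b₂ ^ 2) ^ 3;
        c - t * b₁ * b₂ / Real.sqrt (b₁ ^ 2 + b₂ ^ 2) ^ 3,
        t * b₁ ^ 2 / Real.sqrt (b₁ ^ 2 + b₂ ^ 2) ^ 3;
        b₁ / Real.sqrt (b₁ ^ 2 + b₂ ^ 2),
        b₂ / Real.sqrt (b₁ ^ 2 + b₂ ^ 2)] : Matrix (Fin 3) (Fin 2) ℝ)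
        = Matrix.vecMulVec ![b₁ * b₂ * c / 2, c / 2, b₁ / Real.sqrt 2] ![1, b₁ * b₂] := by
      ext i j
      fin_cases i <;> fin_cases j <;>
        simp only [Matrix.vecMulVec_apply, h3, hsum, ht, Matrix.cons_val', Matrix.cons_val_zero,
          Matrix.cons_val_one, Matrix.head_cons, Matrix.head_fin_const, Matrix.empty_val',
          Matrix.cons_val_fin_one, Matrix.of_apply, Fin.zero_eta, Fin.mk_one, Fin.reduceFinMk, Matrix.cons_val, Matrix.vecHead, Matrix.vecTail] <;>
        field_simp <;>
        ring_nf
      · linear_combination 2*b₂*hb₂2 - b₂*hr2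
      · linear_combination (2 - b₁^2*b₂^2)*hr2 - 4*b₂^2*hb₁2 - 4*hb₂2
      · linear_combination hr2 - 2*b₂^2*hb₁2 - 2*hb₂2
      · linear_combination 2*b₂*hb₁2 - b₂*hr2
      · linear_combination (-b₂)*hb₁2
    rw [hM]
    refine le_antisymm (rank_le_one_vecMulVec _ _) ?_
    apply rank_pos_of_entry_ne_zero _ 2 0
    have : Matrix.vecMulVec ![b₁ * b₂ * c / 2, c / 2, b₁ / Real.sqrt 2] ![1, b₁ * b₂] 2 0
        = b₁ / Real.sqrt 2 := by simp [Matrix.vecMulVec_apply]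
    rw [this]
    exact div_ne_zero hb₁0 hr0
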